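/- Let Q be an inverse quantal frame and X a Q-sheaf. Then for all x, y ∈ X the inner product is computed by the formula ⟨x,y⟩ = ⋁_{u ∈ Q_I} u·ς_X(u*x ∧ y). -/

import Mathlib

/-- A unital involutive quantale: a complete lattice with an associative
multiplication preserving arbitrary joins in each variable, a unit `e`, and a
join-preserving involution. -/
structure IQuantale (Q : Type*) [CompleteLattice Q] where
  mul : Q → Q → Q
  e : Q
  star : Q → Q
  mul_assoc : ∀ a b c, mul (mul a b) c = mul a (mul b c)
  sSup_mul : ∀ (S : Set Q) (b : Q), mul (sSup S) b = ⨆ a ∈ S, mul a b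
  mul_sSup : ∀ (a : Q) (S : Set Q), mul a (sSup S) = ⨆ b ∈ S, mul a b
  e_mul : ∀ a, mul e a = a
  mul_e : ∀ a, mul a e = a
  star_star : ∀ a, star (star a) = a
  star_mul : ∀ a b, star (mul a b) = mul (star b) (star a)
  star_sSup : ∀ S : Set Q, star (sSup S) = ⨆ a ∈ S, star a

/-- The set of partial units of a quantale. -/
def IQuantale.PU {Q : Type*} [CompleteLattice Q] (Qs : IQuantale Q) : Set Q :=
  {s | Qs.mul s (Qs.star s) ≤ Qs.e ∧ Qs.mul (Qs.star s) s ≤ Qs.e}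

/-- An inverse quantal frame: a unital involutive quantale which is a frame,
has a stable support, and whose partial units join to the top. -/
structure InverseQuantalFrame (Q : Type*) [Order.Frame Q] extends toQuantale : IQuantale Q where
  supp : Q → Q
  supp_le_e : ∀ a, supp a ≤ e
  supp_sSup : ∀ S : Set Q, supp (sSup S) = ⨆ a ∈ S, supp a
  supp_le_mul_star : ∀ a, supp a ≤ mul a (star a)
  le_supp_mul : ∀ a, a ≤ mul (supp a) a
  supp_stable : ∀ b a, b ≤ e → supp (mul b a) = mul b (supp a)
  sSup_PU : sSup {s | mul s (star s) ≤ e ∧ mul (star s) s ≤ e} = ⊤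

/-- A left module over a quantale: a complete lattice with a unital associative
action preserving arbitrary joins in each variable. -/
structure QuantaleModule {Q : Type*} [CompleteLattice Q] (Qs : IQuantale Q)
    (X : Type*) [CompleteLattice X] where
  act : Q → X → X
  act_mul : ∀ a b x, act (Qs.mul a b) x = act a (act b x)
  act_e : ∀ x, act Qs.e x = x
  sSup_act : ∀ (S : Set Q) (x : X), act (sSup S) x = ⨆ a ∈ S, act a x
  act_sSup : ∀ (a : Q) (S : Set X), act a (sSup S) = ⨆ x ∈ S, act a x

/-- A pre-Hilbert module over a quantale. -/
structure PreHilbertModule {Q : Type*} [CompleteLattice Q] (Qs : IQuantale Q)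
    (X : Type*) [CompleteLattice X] extends QuantaleModule Qs X where
  inner : X → X → Q
  inner_act : ∀ a x y, inner (act a x) y = Qs.mul a (inner x y)
  sSup_inner : ∀ (S : Set X) (y : X), inner (sSup S) y = ⨆ x ∈ S, inner x y
  inner_star : ∀ x y, inner x y = Qs.star (inner y x)

namespace PreHilbertModule

variable {Q X : Type*} [CompleteLattice Q] [CompleteLattice X] {Qs : IQuantale Q}

/-- A Hilbert section: `⟨x,s⟩s ≤ x` for all `x`. -/
def IsHilbertSection (H : PreHilbertModule Qs X) (s : X) : Prop :=
  ∀ x, H.act (H.inner x s) s ≤ x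

/-- A regular element: `⟨s,s⟩s = s`. -/
def IsRegularSection (H : PreHilbertModule Qs X) (s : X) : Prop :=
  H.act (H.inner s s) s = s

/-- A Hilbert basis: `x = ⋁_{t ∈ S} ⟨x,t⟩t` for all `x`. -/
def IsHilbertBasis (H : PreHilbertModule Qs X) (S : Set X) : Prop :=
  ∀ x, x = ⨆ t ∈ S, H.act (H.inner x t) t

/-- Non-degeneracy of the inner product. -/
def Nondegenerate (H : PreHilbertModule Qs X) : Prop :=
  ∀ x y, (∀ z, H.inner x z = H.inner y z) → x = y

end PreHilbertModule

/-- A `Q`-locale over an inverse quantal frame: a module which is a frame and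
satisfies the anchor condition. -/
structure QLocale {Q : Type*} [Order.Frame Q] (Qf : InverseQuantalFrame Q)
    (X : Type*) [Order.Frame X] extends QuantaleModule Qf.toQuantale X where
  anchor : ∀ b x, b ≤ Qf.e → act b x = act b ⊤ ⊓ x

/-- A `Q`-sheaf over an inverse quantal frame: a pre-Hilbert module which is a
frame, satisfies the anchor condition, and has a Hilbert basis. -/
structure QSheaf {Q : Type*} [Order.Frame Q] (Qf : InverseQuantalFrame Q)
    (X : Type*) [Order.Frame X] extends PreHilbertModule Qf.toQuantale X where
  anchor : ∀ b x, b ≤ Qf.e → act b x = act b ⊤ ⊓ x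
  hasBasis : ∃ S : Set X, ∀ x, x = ⨆ t ∈ S, act (inner x t) t

namespace QSheaf

variable {Q X : Type*} [Order.Frame Q] [Order.Frame X] {Qf : InverseQuantalFrame Q}

/-- The support `ς_X(x) = ⟨x,x⟩ ∧ e` of a `Q`-sheaf. -/
def sppX (H : QSheaf Qf X) (x : X) : Q := H.inner x x ⊓ Qf.e

/-- A local section: `ς_X(x)s = x` for all `x ≤ s`. -/
def IsLocalSection (H : QSheaf Qf X) (s : X) : Prop :=
  ∀ x ≤ s, H.act (H.sppX x) s = x

/-- A principal section: a local section with `⟨s,s⟩ ≤ e`. -/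
def IsPrincipalSection (H : QSheaf Qf X) (s : X) : Prop :=
  H.IsLocalSection s ∧ H.inner s s ≤ Qf.e

/-- A right local section: `x = s ∧ 1_Q·x` for all `x ≤ s`. -/
def IsRightLocalSection (H : QSheaf Qf X) (s : X) : Prop :=
  ∀ x ≤ s, x = s ⊓ H.act ⊤ x

/-- A local bisection: simultaneously a local section and a right local section. -/
def IsBisection (H : QSheaf Qf X) (s : X) : Prop :=
  H.IsLocalSection s ∧ H.IsRightLocalSection s

end QSheaf

namespace Stmt7Aux

open Set

section QLemmas

variable {Q : Type*} [Order.Frame Q] (Qf : InverseQuantalFrame Q)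

theorem mul_iSup_left {ι : Sort*} (f : ι → Q) (b : Q) :
    Qf.mul (⨆ i, f i) b = ⨆ i, Qf.mul (f i) b := by
  rw [← sSup_range, Qf.sSup_mul, iSup_range]

theorem mul_iSup_right {ι : Sort*} (a : Q) (f : ι → Q) :
    Qf.mul a (⨆ i, f i) = ⨆ i, Qf.mul a (f i) := by
  rw [← sSup_range, Qf.mul_sSup, iSup_range]

theorem star_iSup {ι : Sort*} (f : ι → Q) :
    Qf.star (⨆ i, f i) = ⨆ i, Qf.star (f i) := by
  rw [← sSup_range, Qf.star_sSup, iSup_range]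

theorem mul_mono {a b c d : Q} (h1 : a ≤ b) (h2 : c ≤ d) :
    Qf.mul a c ≤ Qf.mul b d := by
  have hb : Qf.mul a c ≤ Qf.mul b c := by
    calc Qf.mul a c ≤ ⨆ x ∈ ({a, b} : Set Q), Qf.mul x c := le_biSup (fun x => Qf.mul x c) (by simp)
      _ = Qf.mul (sSup {a, b}) c := (Qf.sSup_mul _ _).symm
      _ = Qf.mul b c := by rw [sSup_pair, sup_eq_right.mpr h1]
  have hd : Qf.mul b c ≤ Qf.mul b d := by
    calc Qf.mul b c ≤ ⨆ x ∈ ({c, d} : Set Q), Qf.mul b x := le_biSup (fun x => Qf.mul b x) (by simp)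
      _ = Qf.mul b (sSup {c, d}) := (Qf.mul_sSup _ _).symm
      _ = Qf.mul b d := by rw [sSup_pair, sup_eq_right.mpr h2]
  exact hb.trans hd

theorem star_mono {a b : Q} (h : a ≤ b) : Qf.star a ≤ Qf.star b := by
  calc Qf.star a ≤ ⨆ x ∈ ({a, b} : Set Q), Qf.star x := le_biSup (fun x => Qf.star x) (by simp)
    _ = Qf.star (sSup {a, b}) := (Qf.star_sSup _).symm
    _ = Qf.star b := by rw [sSup_pair, sup_eq_right.mpr h]

theorem supp_mono {a b : Q} (h : a ≤ b) : Qf.supp a ≤ Qf.supp b := by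
  calc Qf.supp a ≤ ⨆ x ∈ ({a, b} : Set Q), Qf.supp x := le_biSup (fun x => Qf.supp x) (by simp)
    _ = Qf.supp (sSup {a, b}) := (Qf.supp_sSup _).symm
    _ = Qf.supp b := by rw [sSup_pair, sup_eq_right.mpr h]

theorem star_e : Qf.star Qf.e = Qf.e := by
  calc Qf.star Qf.e = Qf.mul (Qf.star Qf.e) Qf.e := (Qf.mul_e _).symm
    _ = Qf.mul (Qf.star Qf.e) (Qf.star (Qf.star Qf.e)) := by rw [Qf.star_star]
    _ = Qf.star (Qf.mul (Qf.star Qf.e) Qf.e) := (Qf.star_mul _ _).symm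
    _ = Qf.star (Qf.star Qf.e) := by rw [Qf.mul_e]
    _ = Qf.e := Qf.star_star _

theorem supp_e : Qf.supp Qf.e = Qf.e := by
  refine le_antisymm (Qf.supp_le_e _) ?_
  calc Qf.e ≤ Qf.mul (Qf.supp Qf.e) Qf.e := Qf.le_supp_mul _
    _ = Qf.supp Qf.e := Qf.mul_e _

theorem supp_of_le_e {b : Q} (hb : b ≤ Qf.e) : Qf.supp b = b := by
  calc Qf.supp b = Qf.supp (Qf.mul b Qf.e) := by rw [Qf.mul_e]
    _ = Qf.mul b (Qf.supp Qf.e) := Qf.supp_stable b Qf.e hb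
    _ = b := by rw [supp_e, Qf.mul_e]

theorem mul_self_of_le_e {b : Q} (hb : b ≤ Qf.e) : Qf.mul b b = b := by
  refine le_antisymm ?_ ?_
  · calc Qf.mul b b ≤ Qf.mul Qf.e b := mul_mono Qf hb le_rfl
      _ = b := Qf.e_mul _
  · calc b ≤ Qf.mul (Qf.supp b) b := Qf.le_supp_mul _
      _ = Qf.mul b b := by rw [supp_of_le_e Qf hb]

theorem star_of_le_e {b : Q} (hb : b ≤ Qf.e) : Qf.star b = b := by
  have key : ∀ c ≤ Qf.e, c ≤ Qf.star c := by
    intro c hc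
    calc c = Qf.supp c := (supp_of_le_e Qf hc).symm
      _ ≤ Qf.mul c (Qf.star c) := Qf.supp_le_mul_star _
      _ ≤ Qf.mul Qf.e (Qf.star c) := mul_mono Qf hc le_rfl
      _ = Qf.star c := Qf.e_mul _
  have hsb : Qf.star b ≤ Qf.e := by
    calc Qf.star b ≤ Qf.star Qf.e := star_mono Qf hb
      _ = Qf.e := star_e Qf
  refine le_antisymm ?_ (key b hb)
  calc Qf.star b ≤ Qf.star (Qf.star b) := key _ hsb
    _ = b := Qf.star_star _

theorem star_inf (a b : Q) : Qf.star (a ⊓ b) = Qf.star a ⊓ Qf.star b := by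
  refine le_antisymm (le_inf (star_mono Qf inf_le_left) (star_mono Qf inf_le_right)) ?_
  have h : Qf.star (Qf.star a ⊓ Qf.star b) ≤ a ⊓ b := by
    refine le_inf ?_ ?_
    · calc Qf.star (Qf.star a ⊓ Qf.star b) ≤ Qf.star (Qf.star a) := star_mono Qf inf_le_left
        _ = a := Qf.star_star _
    · calc Qf.star (Qf.star a ⊓ Qf.star b) ≤ Qf.star (Qf.star b) := star_mono Qf inf_le_right
        _ = b := Qf.star_star _
  calc Qf.star a ⊓ Qf.star b = Qf.star (Qf.star (Qf.star a ⊓ Qf.star b)) := (Qf.star_star _).symm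
    _ ≤ Qf.star (a ⊓ b) := star_mono Qf h

theorem mem_PU {u : Q} :
    u ∈ Qf.toQuantale.PU ↔ Qf.mul u (Qf.star u) ≤ Qf.e ∧ Qf.mul (Qf.star u) u ≤ Qf.e :=
  Iff.rfl

theorem sSup_PU' : sSup Qf.toQuantale.PU = (⊤ : Q) := Qf.sSup_PU

theorem PU_down {u v : Q} (hu : u ∈ Qf.toQuantale.PU) (h : v ≤ u) :
    v ∈ Qf.toQuantale.PU := by
  rw [mem_PU] at hu ⊢
  exact ⟨le_trans (mul_mono Qf h (star_mono Qf h)) hu.1,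
    le_trans (mul_mono Qf (star_mono Qf h) h) hu.2⟩

theorem PU_of_le_e {b : Q} (hb : b ≤ Qf.e) : b ∈ Qf.toQuantale.PU := by
  rw [mem_PU, star_of_le_e Qf hb, mul_self_of_le_e Qf hb]
  exact ⟨hb, hb⟩

theorem PU_mul {u v : Q} (hu : u ∈ Qf.toQuantale.PU) (hv : v ∈ Qf.toQuantale.PU) :
    Qf.mul u v ∈ Qf.toQuantale.PU := by
  rw [mem_PU] at hu hv ⊢
  constructor
  · calc Qf.mul (Qf.mul u v) (Qf.star (Qf.mul u v))
        = Qf.mul (Qf.mul u v) (Qf.mul (Qf.star v) (Qf.star u)) := by rw [Qf.star_mul]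
      _ = Qf.mul u (Qf.mul (Qf.mul v (Qf.star v)) (Qf.star u)) := by
          rw [Qf.mul_assoc, Qf.mul_assoc]
      _ ≤ Qf.mul u (Qf.mul Qf.e (Qf.star u)) := mul_mono Qf le_rfl (mul_mono Qf hv.1 le_rfl)
      _ = Qf.mul u (Qf.star u) := by rw [Qf.e_mul]
      _ ≤ Qf.e := hu.1
  · calc Qf.mul (Qf.star (Qf.mul u v)) (Qf.mul u v)
        = Qf.mul (Qf.mul (Qf.star v) (Qf.star u)) (Qf.mul u v) := by rw [Qf.star_mul]
      _ = Qf.mul (Qf.star v) (Qf.mul (Qf.mul (Qf.star u) u) v) := by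
          rw [Qf.mul_assoc, Qf.mul_assoc]
      _ ≤ Qf.mul (Qf.star v) (Qf.mul Qf.e v) := mul_mono Qf le_rfl (mul_mono Qf hu.2 le_rfl)
      _ = Qf.mul (Qf.star v) v := by rw [Qf.e_mul]
      _ ≤ Qf.e := hv.2

end QLemmas

section XLemmas

variable {Q X : Type*} [Order.Frame Q] [Order.Frame X] {Qf : InverseQuantalFrame Q}
  (H : QSheaf Qf X)

theorem act_iSup_left {ι : Sort*} (f : ι → Q) (x : X) :
    H.act (⨆ i, f i) x = ⨆ i, H.act (f i) x := by
  rw [← sSup_range, H.sSup_act, iSup_range]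

theorem inner_iSup_left {ι : Sort*} (f : ι → X) (y : X) :
    H.inner (⨆ i, f i) y = ⨆ i, H.inner (f i) y := by
  rw [← sSup_range, H.sSup_inner, iSup_range]

theorem act_mono {a b : Q} {x y : X} (h1 : a ≤ b) (h2 : x ≤ y) :
    H.act a x ≤ H.act b y := by
  have hl : H.act a x ≤ H.act b x := by
    calc H.act a x ≤ ⨆ c ∈ ({a, b} : Set Q), H.act c x := le_biSup (fun c => H.act c x) (by simp)
      _ = H.act (sSup {a, b}) x := (H.sSup_act _ _).symm
      _ = H.act b x := by rw [sSup_pair, sup_eq_right.mpr h1]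
  have hr : H.act b x ≤ H.act b y := by
    calc H.act b x ≤ ⨆ z ∈ ({x, y} : Set X), H.act b z := le_biSup (fun z => H.act b z) (by simp)
      _ = H.act b (sSup {x, y}) := (H.act_sSup _ _).symm
      _ = H.act b y := by rw [sSup_pair, sup_eq_right.mpr h2]
  exact hl.trans hr

theorem inner_mono {x y z w : X} (h1 : x ≤ z) (h2 : y ≤ w) :
    H.inner x y ≤ H.inner z w := by
  have hl : H.inner x y ≤ H.inner z y := by
    calc H.inner x y ≤ ⨆ c ∈ ({x, z} : Set X), H.inner c y := le_biSup (fun c => H.inner c y) (by simp)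
      _ = H.inner (sSup {x, z}) y := (H.sSup_inner _ _).symm
      _ = H.inner z y := by rw [sSup_pair, sup_eq_right.mpr h1]
  have hr : H.inner z y ≤ H.inner z w := by
    rw [H.inner_star z y, H.inner_star z w]
    exact star_mono Qf (by
      calc H.inner y z ≤ ⨆ c ∈ ({y, w} : Set X), H.inner c z := le_biSup (fun c => H.inner c z) (by simp)
        _ = H.inner (sSup {y, w}) z := (H.sSup_inner _ _).symm
        _ = H.inner w z := by rw [sSup_pair, sup_eq_right.mpr h2])
  exact hl.trans hr

theorem inner_smul_right (a : Q) (x y : X) :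
    H.inner x (H.act a y) = Qf.mul (H.inner x y) (Qf.star a) := by
  calc H.inner x (H.act a y) = Qf.star (H.inner (H.act a y) x) := H.inner_star _ _
    _ = Qf.star (Qf.mul a (H.inner y x)) := by rw [H.inner_act]
    _ = Qf.mul (Qf.star (H.inner y x)) (Qf.star a) := Qf.star_mul _ _
    _ = Qf.mul (H.inner x y) (Qf.star a) := by rw [← H.inner_star]

theorem sppX_le_e (x : X) : H.sppX x ≤ Qf.e := inf_le_right

theorem sppX_le_inner (x : X) : H.sppX x ≤ H.inner x x := inf_le_left

theorem section_le {S : Set X} (hS : ∀ x, x = ⨆ t ∈ S, H.act (H.inner x t) t)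
    {t : X} (ht : t ∈ S) (x : X) : H.act (H.inner x t) t ≤ x := by
  conv_rhs => rw [hS x]
  exact le_biSup (fun t => H.act (H.inner x t) t) ht

theorem le_act_sppX {S : Set X} (hS : ∀ x, x = ⨆ t ∈ S, H.act (H.inner x t) t)
    (x : X) : x ≤ H.act (H.sppX x) x := by
  conv_lhs => rw [hS x]
  refine iSup₂_le fun t ht => ?_
  have h1 : H.act (H.inner x t) t ≤ x := section_le H hS ht x
  have h2 : Qf.supp (H.inner x t) ≤ H.sppX x := by
    refine le_inf ?_ (Qf.supp_le_e _)
    calc Qf.supp (H.inner x t) ≤ Qf.mul (H.inner x t) (Qf.star (H.inner x t)) :=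
          Qf.supp_le_mul_star _
      _ = Qf.mul (H.inner x t) (H.inner t x) := by rw [← H.inner_star]
      _ = H.inner (H.act (H.inner x t) t) x := (H.inner_act _ _ _).symm
      _ ≤ H.inner x x := inner_mono H h1 le_rfl
  calc H.act (H.inner x t) t
      ≤ H.act (Qf.mul (H.sppX x) (H.inner x t)) t :=
        act_mono H (le_trans (Qf.le_supp_mul _) (mul_mono Qf h2 le_rfl)) le_rfl
    _ = H.act (H.sppX x) (H.act (H.inner x t) t) := H.act_mul _ _ _
    _ ≤ H.act (H.sppX x) x := act_mono H le_rfl h1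

theorem act_sppX_self {S : Set X} (hS : ∀ x, x = ⨆ t ∈ S, H.act (H.inner x t) t)
    (t : X) : H.act (H.sppX t) t = t := by
  refine le_antisymm ?_ (le_act_sppX H hS t)
  calc H.act (H.sppX t) t ≤ H.act Qf.e t := act_mono H (sppX_le_e H t) le_rfl
    _ = t := H.act_e _

end XLemmas

end Stmt7Aux

namespace Stmt7Aux

section KeyLemma

variable {Q X : Type*} [Order.Frame Q] [Order.Frame X] {Qf : InverseQuantalFrame Q}
  (H : QSheaf Qf X)

/-- The key lemma: `⟨z,y⟩ ∧ e ≤ ⟨z∧y, z∧y⟩`. -/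
theorem key {S : Set X} (hS : ∀ x, x = ⨆ t ∈ S, H.act (H.inner x t) t)
    (z y : X) : H.inner z y ⊓ Qf.e ≤ H.inner (z ⊓ y) (z ⊓ y) := by
  -- Step 1: expand the inner product along the basis
  have h0 : H.inner y z = ⨆ t ∈ S, Qf.mul (H.inner y t) (H.inner t z) := by
    conv_lhs => rw [hS y]
    simp only [inner_iSup_left, H.inner_act]
  have h1 : H.inner z y = ⨆ t ∈ S, Qf.mul (H.inner z t) (H.inner t y) := by
    rw [H.inner_star z y, h0]
    simp only [star_iSup, Qf.star_mul, ← H.inner_star]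
  rw [h1]
  simp only [iSup_inf_eq]
  refine iSup₂_le fun t ht => ?_
  -- Step 2: fix a basis element t; set up its support
  set g0 : Q := H.sppX t with hg0_def
  set g : Q := H.inner t t with hg_def
  have hg0e : g0 ≤ Qf.e := sppX_le_e H t
  have hg0g : g0 ≤ g := sppX_le_inner H t
  have ht0 : H.act g0 t = t := act_sppX_self H hS t
  have hag0 : ∀ w : X, H.inner w t = Qf.mul (H.inner w t) g0 := by
    intro w
    conv_lhs => rw [← ht0]
    rw [inner_smul_right, star_of_le_e Qf hg0e]
  -- Step 3: decompose inner products along partial units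
  have hdec : ∀ w : X, H.inner w t =
      ⨆ u ∈ Qf.toQuantale.PU, Qf.mul (H.inner w t ⊓ u) g0 := by
    intro w
    calc H.inner w t = Qf.mul (H.inner w t) g0 := hag0 w
      _ = Qf.mul (H.inner w t ⊓ ⊤) g0 := by rw [inf_top_eq]
      _ = Qf.mul (H.inner w t ⊓ sSup Qf.toQuantale.PU) g0 := by rw [sSup_PU']
      _ = Qf.mul (⨆ u ∈ Qf.toQuantale.PU, (H.inner w t ⊓ u)) g0 := by rw [inf_sSup_eq]
      _ = ⨆ u ∈ Qf.toQuantale.PU, Qf.mul (H.inner w t ⊓ u) g0 := by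
          simp only [mul_iSup_left]
  rw [H.inner_star t y, hdec z, hdec y]
  simp only [star_iSup, mul_iSup_left, mul_iSup_right, iSup_inf_eq]
  refine iSup₂_le fun v hv => iSup₂_le fun u hu => ?_
  -- Step 4: the core computation for partial units u, v
  set a : Q := Qf.mul (H.inner z t ⊓ u) g0 with ha_def
  set d : Q := Qf.mul (H.inner y t ⊓ v) g0 with hd_def
  set h : Q := Qf.mul a (Qf.star d) ⊓ Qf.e with hh_def
  have haPU : a ∈ Qf.toQuantale.PU :=
    PU_mul Qf (PU_down Qf hu inf_le_right) (PU_of_le_e Qf hg0e)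
  have hdPU : d ∈ Qf.toQuantale.PU :=
    PU_mul Qf (PU_down Qf hv inf_le_right) (PU_of_le_e Qf hg0e)
  have haz : a ≤ H.inner z t := by
    calc a ≤ Qf.mul (H.inner z t) Qf.e := mul_mono Qf inf_le_left hg0e
      _ = H.inner z t := Qf.mul_e _
  have hdy : d ≤ H.inner y t := by
    calc d ≤ Qf.mul (H.inner y t) Qf.e := mul_mono Qf inf_le_left hg0e
      _ = H.inner y t := Qf.mul_e _
  set p : X := H.act a t with hp_def
  set q : X := H.act d t with hq_def
  have hpz : p ≤ z := le_trans (act_mono H haz le_rfl) (section_le H hS ht z)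
  have hqy : q ≤ y := le_trans (act_mono H hdy le_rfl) (section_le H hS ht y)
  have hdg0 : Qf.mul d g0 = d := by
    rw [hd_def, Qf.mul_assoc, mul_self_of_le_e Qf hg0e]
  have hstar_d : Qf.star d = Qf.mul g0 (Qf.star d) := by
    conv_lhs => rw [← hdg0]
    rw [Qf.star_mul, star_of_le_e Qf hg0e]
  have hhe : h ≤ Qf.e := inf_le_right
  have hh1 : h ≤ Qf.mul a (Qf.star d) := inf_le_left
  have hstar_h : Qf.star h = h := star_of_le_e Qf hhe
  have hh2 : h ≤ Qf.mul d (Qf.star a) := by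
    calc h = Qf.star h := hstar_h.symm
      _ ≤ Qf.star (Qf.mul a (Qf.star d)) := star_mono Qf hh1
      _ = Qf.mul (Qf.star (Qf.star d)) (Qf.star a) := Qf.star_mul _ _
      _ = Qf.mul d (Qf.star a) := by rw [Qf.star_star]
  have hhh : Qf.mul h h = h := mul_self_of_le_e Qf hhe
  have hhp_le_q : H.act h p ≤ q := by
    calc H.act h p = H.act (Qf.mul h a) t := (H.act_mul _ _ _).symm
      _ ≤ H.act (Qf.mul d (Qf.mul (Qf.star a) a)) t := by
          refine act_mono H ?_ le_rfl
          calc Qf.mul h a ≤ Qf.mul (Qf.mul d (Qf.star a)) a := mul_mono Qf hh2 le_rfl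
            _ = Qf.mul d (Qf.mul (Qf.star a) a) := Qf.mul_assoc _ _ _
      _ = H.act d (H.act (Qf.mul (Qf.star a) a) t) := H.act_mul _ _ _
      _ ≤ H.act d (H.act Qf.e t) := act_mono H le_rfl (act_mono H haPU.2 le_rfl)
      _ = q := by rw [H.act_e]
  have hhq_le_p : H.act h q ≤ p := by
    calc H.act h q = H.act (Qf.mul h d) t := (H.act_mul _ _ _).symm
      _ ≤ H.act (Qf.mul a (Qf.mul (Qf.star d) d)) t := by
          refine act_mono H ?_ le_rfl
          calc Qf.mul h d ≤ Qf.mul (Qf.mul a (Qf.star d)) d := mul_mono Qf hh1 le_rfl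
            _ = Qf.mul a (Qf.mul (Qf.star d) d) := Qf.mul_assoc _ _ _
      _ = H.act a (H.act (Qf.mul (Qf.star d) d) t) := H.act_mul _ _ _
      _ ≤ H.act a (H.act Qf.e t) := act_mono H le_rfl (act_mono H hdPU.2 le_rfl)
      _ = p := by rw [H.act_e]
  have hhp_le_p : H.act h p ≤ p := by
    calc H.act h p ≤ H.act Qf.e p := act_mono H hhe le_rfl
      _ = p := H.act_e _
  have hhq_le_q : H.act h q ≤ q := by
    calc H.act h q ≤ H.act Qf.e q := act_mono H hhe le_rfl
      _ = q := H.act_e _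
  -- Step 5: h ≤ ⟨hp, hq⟩
  have hpq : H.inner p q = Qf.mul a (Qf.mul g (Qf.star d)) := by
    calc H.inner (H.act a t) (H.act d t) = Qf.mul a (H.inner t (H.act d t)) :=
          H.inner_act _ _ _
      _ = Qf.mul a (Qf.mul (H.inner t t) (Qf.star d)) := by rw [inner_smul_right]
  have hcalc : H.inner (H.act h p) (H.act h q) = Qf.mul h (Qf.mul (H.inner p q) h) := by
    calc H.inner (H.act h p) (H.act h q) = Qf.mul h (H.inner p (H.act h q)) :=
          H.inner_act _ _ _
      _ = Qf.mul h (Qf.mul (H.inner p q) (Qf.star h)) := by rw [inner_smul_right]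
      _ = Qf.mul h (Qf.mul (H.inner p q) h) := by rw [hstar_h]
  have hle : h ≤ Qf.mul a (Qf.mul g (Qf.star d)) := by
    calc h ≤ Qf.mul a (Qf.star d) := hh1
      _ = Qf.mul a (Qf.mul g0 (Qf.star d)) := by rw [← hstar_d]
      _ ≤ Qf.mul a (Qf.mul g (Qf.star d)) := mul_mono Qf le_rfl (mul_mono Qf hg0g le_rfl)
  have hfinal : h ≤ H.inner (H.act h p) (H.act h q) := by
    calc h = Qf.mul h (Qf.mul h h) := by rw [hhh, hhh]
      _ ≤ Qf.mul h (Qf.mul (Qf.mul a (Qf.mul g (Qf.star d))) h) :=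
          mul_mono Qf le_rfl (mul_mono Qf hle le_rfl)
      _ = Qf.mul h (Qf.mul (H.inner p q) h) := by rw [hpq]
      _ = H.inner (H.act h p) (H.act h q) := hcalc.symm
  refine le_trans hfinal (inner_mono H ?_ ?_)
  · exact le_inf (hhp_le_p.trans hpz) (hhp_le_q.trans hqy)
  · exact le_inf (hhq_le_p.trans hpz) (hhq_le_q.trans hqy)

end KeyLemma

end Stmt7Aux

/-- In a `Q`-sheaf, the inner product is computed by
`⟨x,y⟩ = ⋁_{u ∈ Q_I} u·ς_X(u*x ∧ y)`. -/
theorem stmt7 {Q X : Type*} [Order.Frame Q] [Order.Frame X]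
    (Qf : InverseQuantalFrame Q) (H : QSheaf Qf X) (x y : X) :
    H.inner x y =
      ⨆ u ∈ Qf.toQuantale.PU, Qf.mul u (H.sppX (H.act (Qf.star u) x ⊓ y)) := by
  open Stmt7Aux in
  obtain ⟨S, hS⟩ := H.hasBasis
  refine le_antisymm ?_ ?_
  · -- (≤) direction
    have hdecomp : H.inner x y = ⨆ u ∈ Qf.toQuantale.PU, (u ⊓ H.inner x y) := by
      rw [← sSup_inf_eq, sSup_PU', top_inf_eq]
    conv_lhs => rw [hdecomp]
    refine iSup₂_le fun u hu => ?_
    set v : Q := u ⊓ H.inner x y with hv_def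
    have hvu : v ≤ u := inf_le_left
    have hvPU : v ∈ Qf.toQuantale.PU := PU_down Qf hu hvu
    have hb_e : Qf.mul (Qf.star v) v ≤ Qf.e := hvPU.2
    have hbz : Qf.mul (Qf.star v) v ≤ H.inner (H.act (Qf.star u) x) y := by
      calc Qf.mul (Qf.star v) v ≤ Qf.mul (Qf.star u) (H.inner x y) :=
            mul_mono Qf (star_mono Qf hvu) inf_le_right
        _ = H.inner (H.act (Qf.star u) x) y := (H.inner_act _ _ _).symm
    have hb2 : Qf.mul (Qf.star v) v ≤ H.sppX (H.act (Qf.star u) x ⊓ y) := by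
      refine le_inf ?_ hb_e
      exact le_trans (le_inf hbz hb_e) (key H hS (H.act (Qf.star u) x) y)
    have : v ≤ Qf.mul u (H.sppX (H.act (Qf.star u) x ⊓ y)) := by
      calc v ≤ Qf.mul (Qf.supp v) v := Qf.le_supp_mul v
        _ ≤ Qf.mul (Qf.mul v (Qf.star v)) v := mul_mono Qf (Qf.supp_le_mul_star v) le_rfl
        _ = Qf.mul v (Qf.mul (Qf.star v) v) := Qf.mul_assoc _ _ _
        _ ≤ Qf.mul u (H.sppX (H.act (Qf.star u) x ⊓ y)) := mul_mono Qf hvu hb2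
    exact le_trans this
      (le_biSup (fun u => Qf.mul u (H.sppX (H.act (Qf.star u) x ⊓ y))) hu)
  · -- (≥) direction
    refine iSup₂_le fun u hu => ?_
    have h1 : H.sppX (H.act (Qf.star u) x ⊓ y) ≤ Qf.mul (Qf.star u) (H.inner x y) := by
      calc H.sppX (H.act (Qf.star u) x ⊓ y)
          ≤ H.inner (H.act (Qf.star u) x ⊓ y) (H.act (Qf.star u) x ⊓ y) := inf_le_left
        _ ≤ H.inner (H.act (Qf.star u) x) y := inner_mono H inf_le_left inf_le_right
        _ = Qf.mul (Qf.star u) (H.inner x y) := H.inner_act _ _ _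
    calc Qf.mul u (H.sppX (H.act (Qf.star u) x ⊓ y))
        ≤ Qf.mul u (Qf.mul (Qf.star u) (H.inner x y)) := mul_mono Qf le_rfl h1
      _ = Qf.mul (Qf.mul u (Qf.star u)) (H.inner x y) := (Qf.mul_assoc _ _ _).symm
      _ ≤ Qf.mul Qf.e (H.inner x y) := mul_mono Qf hu.1 le_rfl
      _ = H.inner x y := Qf.e_mul _
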